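/- Let (A, Con, ⊢, Δ) be an information system with witnesses and x ⊆ A. Then x satisfies both state conditions (ST1): for every finite F ⊆ x there is i ∈ x with F ∈ Con(i), and (ST3): for every a ∈ x there are i ∈ x and finite X ⊆ x with X ∈ Con(i) and (i,X) ⊢ a — if and only if x satisfies condition (ST): for every finite F ⊆ x there exist i ∈ x and finite X ⊆ x with X ∈ Con(i) and (i,X) ⊢ F, given that x also satisfies the entailment-closure condition (ST2): for all i ∈ x, finite X ⊆ x, a ∈ A, if X ∈ Con(i) and (i,X) ⊢ a then a ∈ x. -/
import Mathlib


variable {A : Type*}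

/-- An information system with witnesses `(A, Con, ⊢, Δ)`. -/
structure IsISW (Δ : A) (Con : A → Finset A → Prop)
    (ent : A → Finset A → A → Prop) : Prop where
  dom : ∀ i X a, ent i X a → Con i X
  ax1 : ∀ i, Con i {i}
  ax2 : ∀ i (X Y : Finset A), Y ⊆ X → Con i X → Con i Y
  ax3 : ∀ i, ent i ∅ Δ
  ax4 : ∀ i (X Y : Finset A), Con i X → (∀ b ∈ Y, ent i X b) → Con i Y
  ax5 : ∀ i (X Y : Finset A) (a : A), Con i X → Con i Y → X ⊆ Y → ent i X a → ent i Y a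
  ax6 : ∀ i (X Y : Finset A) (a : A), Con i X → (∀ b ∈ Y, ent i X b) → ent i Y a → ent i X a
  ax7 : ∀ i j : A, Con j {i} → ∀ X, Con i X → Con j X
  ax8 : ∀ (i j : A) (X : Finset A) (a : A), Con j {i} → Con i X → ent i X a → ent j X a
  ax9 : ∀ (i j : A) (X : Finset A) (a : A), Con j {i} → Con i X → ent j X a → ent i X a
  ax10 : ∀ i (X Y : Finset A), Con i X → (∀ b ∈ Y, ent i X b) →
      ∃ e Z, Con e Z ∧ ent i X e ∧ (∀ b ∈ Z, ent i X b) ∧ (∀ b ∈ Y, ent e Z b)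

/-- A state of an information system with witnesses: finitely consistent with a
witness in the state (ST1), entailment-closed (ST2), every element derivable (ST3). -/
def IsState (Con : A → Finset A → Prop) (ent : A → Finset A → A → Prop)
    (x : Set A) : Prop :=
  (∀ F : Finset A, ↑F ⊆ x → ∃ i ∈ x, Con i F) ∧
  (∀ i ∈ x, ∀ X : Finset A, ↑X ⊆ x → Con i X → ∀ a, ent i X a → a ∈ x) ∧
  (∀ a ∈ x, ∃ i ∈ x, ∃ X : Finset A, ↑X ⊆ x ∧ Con i X ∧ ent i X a)

theorem stmt5 {Δ : A} {Con : A → Finset A → Prop} {ent : A → Finset A → A → Prop}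
    (h : IsISW Δ Con ent) (x : Set A)
    (hST2 : ∀ i ∈ x, ∀ X : Finset A, ↑X ⊆ x → Con i X → ∀ a, ent i X a → a ∈ x) :
    ((∀ F : Finset A, ↑F ⊆ x → ∃ i ∈ x, Con i F) ∧
      (∀ a ∈ x, ∃ i ∈ x, ∃ X : Finset A, ↑X ⊆ x ∧ Con i X ∧ ent i X a)) ↔
    (∀ F : Finset A, ↑F ⊆ x →
      ∃ i ∈ x, ∃ X : Finset A, ↑X ⊆ x ∧ Con i X ∧ ∀ b ∈ F, ent i X b) := by
  constructor
  · rintro ⟨h1, h3⟩ F hF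
    classical
    induction F using Finset.induction_on with
    | empty =>
        obtain ⟨i, hi, _⟩ := h1 ∅ (by simp)
        exact ⟨i, hi, ∅, by simp, h.ax2 i {i} ∅ (by simp) (h.ax1 i), by simp⟩
    | @insert a F' ha IH =>
        have hax : a ∈ x := hF (by simp)
        have hF' : ↑F' ⊆ x := fun b hb => hF (by simp [hb])
        obtain ⟨i, hi, X, hXx, hCX, hentX⟩ := IH hF'
        obtain ⟨j, hj, Y, hYx, hCY, hentY⟩ := h3 a hax
        obtain ⟨k, hk, hCk⟩ := h1 ((X ∪ Y) ∪ {i, j})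
          (by push_cast; intro b hb
              simp only [Finset.coe_union, Set.mem_union] at *
              rcases hb with (hb|hb)|hb
              · exact hXx hb
              · exact hYx hb
              · simp only [Finset.coe_insert, Finset.coe_singleton, Set.mem_insert_iff,
                  Set.mem_singleton_iff] at hb
                rcases hb with rfl|rfl
                · exact hi
                · exact hj)
        have hki : Con k {i} := h.ax2 k _ {i} (by intro b hb; simp at hb; simp [hb]) hCk
        have hkj : Con k {j} := h.ax2 k _ {j} (by intro b hb; simp at hb; simp [hb]) hCk
        have hkXY : Con k (X ∪ Y) := h.ax2 k _ _ Finset.subset_union_left hCk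
        have hkX : Con k X := h.ax2 k _ X Finset.subset_union_left hkXY
        have hkY : Con k Y := h.ax2 k _ Y Finset.subset_union_right hkXY
        refine ⟨k, hk, X ∪ Y, ?_, hkXY, ?_⟩
        · push_cast; exact Set.union_subset hXx hYx
        · intro b hb
          rcases Finset.mem_insert.mp hb with rfl | hb
          · exact h.ax5 k Y (X ∪ Y) b hkY hkXY Finset.subset_union_right
              (h.ax8 j k Y b hkj hCY hentY)
          · exact h.ax5 k X (X ∪ Y) b hkX hkXY Finset.subset_union_left
              (h.ax8 i k X b hki hCX (hentX b hb))
  · rintro hST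
    constructor
    · intro F hF
      obtain ⟨i, hi, X, hXx, hCX, hent⟩ := hST F hF
      exact ⟨i, hi, h.ax4 i X F hCX hent⟩
    · intro a ha
      obtain ⟨i, hi, X, hXx, hCX, hent⟩ := hST {a} (by simpa)
      exact ⟨i, hi, X, hXx, hCX, hent a (by simp)⟩
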